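/- Let (E, D(E)) be a symmetric bilinear form on a space of functions such that E(|u|) ≤ E(u) for all u (positivity preserving). If h ∈ D(E) satisfies E(h, ψ) ≥ 0 for all nonnegative ψ ∈ D(E) and E(h⁻) is finite, then E(h⁻) ≤ 0, where h⁻ = max(-h, 0) and h⁺ = max(h, 0); more precisely 0 ≤ E(h⁻) ≤ E(h⁺, h⁻) ≤ 0, hence E(h⁻) = 0. -/
import Mathlib


/-- Let `(a, D)` be a positive semi-definite symmetric bilinear form on functions that is
positivity preserving (`a |u| |u| ≤ a u u`).  If `h ∈ D` satisfies `a h ψ ≥ 0` for all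
nonnegative `ψ ∈ D`, then with `h⁺ = max(h,0)` and `h⁻ = max(-h,0)` one has
`0 ≤ a h⁻ h⁻ ≤ a h⁺ h⁻ ≤ 0`, hence `a h⁻ h⁻ = 0`. -/
theorem stmt7 {α : Type*} (D : Set (α → ℝ)) (a : (α → ℝ) → (α → ℝ) → ℝ)
    (hsymm : ∀ u v, a u v = a v u)
    (haddl : ∀ u v w, a (u + v) w = a u w + a v w)
    (hsmul : ∀ (c : ℝ) u v, a (c • u) v = c * a u v)
    (hposdef : ∀ u ∈ D, 0 ≤ a u u)
    (hpp : ∀ u ∈ D, (fun x => |u x|) ∈ D ∧ a (fun x => |u x|) (fun x => |u x|) ≤ a u u)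
    (h : α → ℝ) (hh : h ∈ D)
    (hplus : (fun x => max (h x) 0) ∈ D) (hminus : (fun x => max (-h x) 0) ∈ D)
    (hweak : ∀ ψ ∈ D, (∀ x, 0 ≤ ψ x) → 0 ≤ a h ψ) :
    0 ≤ a (fun x => max (-h x) 0) (fun x => max (-h x) 0) ∧
      a (fun x => max (-h x) 0) (fun x => max (-h x) 0) ≤
        a (fun x => max (h x) 0) (fun x => max (-h x) 0) ∧
      a (fun x => max (h x) 0) (fun x => max (-h x) 0) ≤ 0 ∧
      a (fun x => max (-h x) 0) (fun x => max (-h x) 0) = 0 := by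
  set p : α → ℝ := fun x => max (h x) 0 with hp
  set m : α → ℝ := fun x => max (-h x) 0 with hm
  have haddr : ∀ u v w, a u (v + w) = a u v + a u w := by
    intro u v w
    rw [hsymm, haddl, hsymm v, hsymm w]
  have habs : (fun x => |h x|) = p + m := by
    funext x
    simp only [hp, hm, Pi.add_apply]
    rcases le_total (h x) 0 with hx | hx
    · rw [abs_of_nonpos hx, max_eq_right hx, max_eq_left (by linarith)]; ring
    · rw [abs_of_nonneg hx, max_eq_left hx, max_eq_right (by linarith)]; ring
  have hdec : h = p + (-1 : ℝ) • m := by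
    funext x
    simp only [hp, hm, Pi.add_apply, Pi.smul_apply, smul_eq_mul]
    rcases le_total (h x) 0 with hx | hx
    · rw [max_eq_right hx, max_eq_left (by linarith)]; ring
    · rw [max_eq_left hx, max_eq_right (by linarith)]; ring
  have key : a p m ≤ 0 := by
    have := (hpp h hh).2
    rw [habs] at this
    rw [hdec] at this
    have hsmulr : ∀ (c : ℝ) u v, a u (c • v) = c * a u v := by
      intro c u v; rw [hsymm, hsmul, hsymm]
    simp only [haddl, haddr, hsmul, hsmulr] at this
    have hpm : a m p = a p m := hsymm m p
    nlinarith [this]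
  have hmm : 0 ≤ a m m := hposdef m hminus
  have hw : 0 ≤ a h m := hweak m hminus (fun x => le_max_right _ _)
  have hkey2 : a m m ≤ a p m := by
    rw [hdec, haddl, hsmul] at hw
    linarith
  exact ⟨hmm, hkey2, key, le_antisymm (hkey2.trans key) hmm⟩
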